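/- Let g > 0, k > 0 and η = 7/3. On ℝ² \ {(0,0)}, with r = ‖(x, y)‖ = √(x² + y²), define Z(x, y) = (2kr − 1)/(2g r²), h(x, y) = 1, q_x(x, y) = x/r² and q_y(x, y) = y/r². Then these functions form an exact steady solution of the 2D shallow water equations with topography and Manning friction: for all (x, y) ≠ (0, 0), (i) ∂_x q_x + ∂_y q_y = 0, (ii) ∂_x(q_x²/h + (g/2)h²) + ∂_y(q_x q_y/h) = −g h ∂_x Z − k q_x ‖q‖ h^{−η}, and (iii) ∂_x(q_x q_y/h) + ∂_y(q_y²/h + (g/2)h²) = −g h ∂_y Z − k q_y ‖q‖ h^{−η}, where ‖q‖ = √(q_x² + q_y²). -/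

import Mathlib

/-- Exact steady solution of the 2D shallow water equations with topography
and Manning friction: with `η = 7/3`, `r = √(x² + y²)`,
`Z = (2kr − 1)/(2gr²)`, `h = 1`, `q_x = x/r²`, `q_y = y/r²`, the mass and
both momentum equations hold pointwise on `ℝ² \ {(0,0)}`. -/
theorem steady_solution_topography_friction (g k : ℝ) (hg : 0 < g) (hk : 0 < k) :
    let η : ℝ := 7 / 3
    let Z : ℝ → ℝ → ℝ := fun x y =>
      (2 * k * Real.sqrt (x ^ 2 + y ^ 2) - 1) / (2 * g * (x ^ 2 + y ^ 2))
    let h : ℝ → ℝ → ℝ := fun _ _ => 1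
    let qx : ℝ → ℝ → ℝ := fun x y => x / (x ^ 2 + y ^ 2)
    let qy : ℝ → ℝ → ℝ := fun x y => y / (x ^ 2 + y ^ 2)
    ∀ x y : ℝ, (x, y) ≠ (0, 0) →
      (deriv (fun x' => qx x' y) x + deriv (fun y' => qy x y') y = 0) ∧
      (deriv (fun x' => (qx x' y) ^ 2 / h x' y + g / 2 * (h x' y) ^ 2) x +
          deriv (fun y' => qx x y' * qy x y' / h x y') y =
        -g * h x y * deriv (fun x' => Z x' y) x -
          k * qx x y * Real.sqrt ((qx x y) ^ 2 + (qy x y) ^ 2) * (h x y) ^ (-η)) ∧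
      (deriv (fun x' => qx x' y * qy x' y / h x' y) x +
          deriv (fun y' => (qy x y') ^ 2 / h x y' + g / 2 * (h x y') ^ 2) y =
        -g * h x y * deriv (fun y' => Z x y') y -
          k * qy x y * Real.sqrt ((qx x y) ^ 2 + (qy x y) ^ 2) * (h x y) ^ (-η)) := by
  intro η Z h qx qy x y hxy
  have hxy' : ¬(x = 0 ∧ y = 0) := by simpa [Prod.ext_iff] using hxy
  have hs : 0 < x ^ 2 + y ^ 2 := by
    rcases not_and_or.mp hxy' with hx | hy
    · exact add_pos_of_pos_of_nonneg
        ((sq_nonneg x).lt_of_ne (Ne.symm (pow_ne_zero 2 hx))) (sq_nonneg y)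
    · exact add_pos_of_nonneg_of_pos (sq_nonneg x)
        ((sq_nonneg y).lt_of_ne (Ne.symm (pow_ne_zero 2 hy)))
  have sne : x ^ 2 + y ^ 2 ≠ 0 := hs.ne'
  -- basic derivatives
  have hA : HasDerivAt (fun x' : ℝ => x' ^ 2 + y ^ 2) (2 * x) x := by
    simpa using (hasDerivAt_pow 2 x).add_const (y ^ 2)
  have hA' : HasDerivAt (fun y' : ℝ => x ^ 2 + y' ^ 2) (2 * y) y := by
    simpa using (hasDerivAt_pow 2 y).const_add (x ^ 2)
  have hQx : HasDerivAt (fun x' : ℝ => x' / (x' ^ 2 + y ^ 2))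
      ((1 * (x ^ 2 + y ^ 2) - x * (2 * x)) / (x ^ 2 + y ^ 2) ^ 2) x :=
    (hasDerivAt_id x).div hA sne
  have hQy : HasDerivAt (fun y' : ℝ => y' / (x ^ 2 + y' ^ 2))
      ((1 * (x ^ 2 + y ^ 2) - y * (2 * y)) / (x ^ 2 + y ^ 2) ^ 2) y :=
    (hasDerivAt_id y).div hA' sne
  have hCx : HasDerivAt (fun y' : ℝ => x / (x ^ 2 + y' ^ 2))
      ((0 * (x ^ 2 + y ^ 2) - x * (2 * y)) / (x ^ 2 + y ^ 2) ^ 2) y :=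
    (hasDerivAt_const y x).div hA' sne
  have hCy : HasDerivAt (fun x' : ℝ => y / (x' ^ 2 + y ^ 2))
      ((0 * (x ^ 2 + y ^ 2) - y * (2 * x)) / (x ^ 2 + y ^ 2) ^ 2) x :=
    (hasDerivAt_const x y).div hA sne
  -- sqrt and Z derivatives
  have hsqx : HasDerivAt (fun x' : ℝ => Real.sqrt (x' ^ 2 + y ^ 2))
      (1 / (2 * Real.sqrt (x ^ 2 + y ^ 2)) * (2 * x)) x :=
    (Real.hasDerivAt_sqrt sne).comp x hA
  have hsqy : HasDerivAt (fun y' : ℝ => Real.sqrt (x ^ 2 + y' ^ 2))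
      (1 / (2 * Real.sqrt (x ^ 2 + y ^ 2)) * (2 * y)) y :=
    (Real.hasDerivAt_sqrt sne).comp y hA'
  have denne : 2 * g * (x ^ 2 + y ^ 2) ≠ 0 := by positivity
  have hZx : HasDerivAt (fun x' : ℝ =>
      (2 * k * Real.sqrt (x' ^ 2 + y ^ 2) - 1) / (2 * g * (x' ^ 2 + y ^ 2)))
      ((2 * k * (1 / (2 * Real.sqrt (x ^ 2 + y ^ 2)) * (2 * x)) * (2 * g * (x ^ 2 + y ^ 2)) -
        (2 * k * Real.sqrt (x ^ 2 + y ^ 2) - 1) * (2 * g * (2 * x))) /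
        (2 * g * (x ^ 2 + y ^ 2)) ^ 2) x :=
    ((hsqx.const_mul (2 * k)).sub_const 1).div (hA.const_mul (2 * g)) denne
  have hZy : HasDerivAt (fun y' : ℝ =>
      (2 * k * Real.sqrt (x ^ 2 + y' ^ 2) - 1) / (2 * g * (x ^ 2 + y' ^ 2)))
      ((2 * k * (1 / (2 * Real.sqrt (x ^ 2 + y ^ 2)) * (2 * y)) * (2 * g * (x ^ 2 + y ^ 2)) -
        (2 * k * Real.sqrt (x ^ 2 + y ^ 2) - 1) * (2 * g * (2 * y))) /
        (2 * g * (x ^ 2 + y ^ 2)) ^ 2) y :=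
    ((hsqy.const_mul (2 * k)).sub_const 1).div (hA'.const_mul (2 * g)) denne
  -- norm of q
  have hr2 : Real.sqrt (x ^ 2 + y ^ 2) ^ 2 = x ^ 2 + y ^ 2 := Real.sq_sqrt hs.le
  have hrpos : 0 < Real.sqrt (x ^ 2 + y ^ 2) := Real.sqrt_pos.mpr hs
  have hnorm : Real.sqrt ((x / (x ^ 2 + y ^ 2)) ^ 2 + (y / (x ^ 2 + y ^ 2)) ^ 2)
      = 1 / Real.sqrt (x ^ 2 + y ^ 2) := by
    rw [show (x / (x ^ 2 + y ^ 2)) ^ 2 + (y / (x ^ 2 + y ^ 2)) ^ 2 = (x ^ 2 + y ^ 2)⁻¹ by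
      field_simp, Real.sqrt_inv, one_div]
  simp only [Z, h, qx, qy, η, div_one, one_pow, mul_one, Real.one_rpow, hnorm]
  set r := Real.sqrt (x ^ 2 + y ^ 2) with hrdef
  refine ⟨?_, ?_, ?_⟩
  · rw [hQx.deriv, hQy.deriv]
    field_simp
    ring
  · rw [((hQx.fun_pow 2).add_const (g / 2)).deriv, (hCx.fun_mul hQy).deriv, hZx.deriv]
    rw [show x ^ 2 + y ^ 2 = r ^ 2 from hr2.symm]
    field_simp
    have h' : r ^ 2 * (r ^ 2)⁻¹ = 1 := mul_inv_cancel₀ (by positivity)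
    norm_num only [pow_one]
    linear_combination 4 * x * hr2 + 2 * x * (r ^ 2 - 2 * x ^ 2) * h'
  · rw [(hQx.fun_mul hCy).deriv, ((hQy.fun_pow 2).add_const (g / 2)).deriv, hZy.deriv]
    rw [show x ^ 2 + y ^ 2 = r ^ 2 from hr2.symm]
    field_simp
    have h' : r ^ 2 * (r ^ 2)⁻¹ = 1 := mul_inv_cancel₀ (by positivity)
    norm_num only [pow_one]
    linear_combination 4 * y * hr2 + 2 * y * (r ^ 2 - 2 * y ^ 2) * h'
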